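/- arXiv:math/0411281 — 3 statements merged into one kernel-verified Lean document; each statement's English description precedes it below -/
import Mathlib

section
/- Let r ≥ 3 be an integer and let L = {0, 1/2, 1, ..., (r-2)/2} be the set of admissible spins (equivalently, indexed by integers a = 2j with 0 ≤ a ≤ r-2). Define the Fourier kernel H_{jk} = (-1)^{2j+2k} · sin(π(2j+1)(2k+1)/r) / sin(π/r), the quantum dimension dim_q j = H_{0j}, and N = Σ_{j∈L} (dim_q j)². Then for all j, l ∈ L one has the orthogonality relation Σ_{k∈L} H_{jk} · H_{kl} = N · δ_{jl}, where δ_{jl} is the Kronecker delta. -/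
open Real Finset

lemma cos_sum_geom (r : ℕ) (hr : 0 < r) (t : ℤ) :
    ∑ k ∈ Finset.range r, Real.cos (π * t * k / r) =
      if (2 * (r:ℤ)) ∣ t then (r:ℝ) else if (2:ℤ) ∣ t then 0 else 1 := by
  have hrR : (r:ℝ) ≠ 0 := Nat.cast_ne_zero.mpr hr.ne'
  have hrC : (r:ℂ) ≠ 0 := Nat.cast_ne_zero.mpr hr.ne'
  set θ : ℝ := π * t / r with hθ
  have key : ∀ k : ℕ, Real.cos (π * t * k / r) = ((Complex.exp (θ * Complex.I)) ^ k).re := by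
    intro k
    rw [← Complex.exp_nat_mul]
    have : (k : ℂ) * (↑θ * Complex.I) = ((k * θ : ℝ) : ℂ) * Complex.I := by
      push_cast; ring
    rw [this, Complex.exp_ofReal_mul_I_re]
    congr 1
    field_simp [hθ]
    rw [hθ]; field_simp
  simp only [key]
  rw [← Complex.re_sum]
  set z : ℂ := Complex.exp (θ * Complex.I) with hz
  by_cases h1 : (2 * (r:ℤ)) ∣ t
  · have hz1 : z = 1 := by
      obtain ⟨c, hc⟩ := h1
      rw [hz]
      have : (θ : ℂ) * Complex.I = (c : ℤ) * (2 * π * Complex.I) := by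
        rw [hθ]
        push_cast [hc]
        field_simp
      rw [this, Complex.exp_int_mul_two_pi_mul_I]
    simp [hz1, h1]
  · have hzne : z ≠ 1 := by
      intro hzz
      rw [hz, Complex.exp_eq_one_iff] at hzz
      obtain ⟨n, hn⟩ := hzz
      apply h1
      refine ⟨n, ?_⟩
      have hR : θ = (n : ℝ) * (2 * π) := by
        have := congrArg Complex.im hn
        simpa using this
      rw [hθ] at hR
      have hπ : π ≠ 0 := Real.pi_ne_zero
      field_simp at hR
      have hc : π * (t:ℝ) = π * (2 * r * n) := by rw [hR]; ring
      have : (t:ℝ) = 2 * r * n := mul_left_cancel₀ hπ hc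
      exact_mod_cast this
    rw [geom_sum_eq hzne]
    have hzr : z ^ r = ((-1 : ℂ)) ^ t := by
      rw [hz, ← Complex.exp_nat_mul, ← Complex.exp_pi_mul_I, ← Complex.exp_int_mul]
      congr 1
      rw [hθ]; push_cast; field_simp
    by_cases h2 : (2:ℤ) ∣ t
    · have hzr1 : z ^ r = 1 := by
        obtain ⟨c, hc⟩ := h2
        rw [hzr, hc, zpow_mul]; norm_num
      rw [if_neg h1, if_pos h2, hzr1]
      simp
    · have hodd : z ^ r = -1 := by
        rcases Int.even_or_odd t with he | ho
        · exact absurd he.two_dvd h2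
        · obtain ⟨c, hc⟩ := ho
          rw [hzr, hc, zpow_add₀ (by norm_num : (-1:ℂ) ≠ 0), zpow_mul]
          norm_num
      rw [if_neg h1, if_neg h2, hodd]
      have hzre : z.re = Real.cos θ := Complex.exp_ofReal_mul_I_re θ
      have hzim : z.im = Real.sin θ := Complex.exp_ofReal_mul_I_im θ
      have hne0 : z - 1 ≠ 0 := sub_ne_zero.mpr hzne
      have hns : Complex.normSq (z - 1) = 2 - 2 * Real.cos θ := by
        rw [Complex.normSq_apply, Complex.sub_re, Complex.sub_im, Complex.one_re,
          Complex.one_im, hzre, hzim]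
        nlinarith [Real.sin_sq_add_cos_sq θ]
      have hns0 : (2 : ℝ) - 2 * Real.cos θ ≠ 0 := by
        rw [← hns]; simpa [Complex.normSq_eq_zero] using hne0
      rw [Complex.div_re, hns]
      simp only [Complex.sub_re, Complex.sub_im, Complex.one_re, Complex.one_im,
        Complex.neg_re, Complex.neg_im, hzre, hzim]
      field_simp
      have h1c : 1 - Real.cos θ ≠ 0 := by intro h; apply hns0; linarith
      rw [div_eq_iff h1c]; ring

lemma cos_sum_shift (r : ℕ) (hr : 0 < r) (t : ℤ) :
    ∑ k ∈ Finset.range (r - 1), Real.cos (π * t * (k + 1) / r) =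
      (if (2 * (r:ℤ)) ∣ t then (r:ℝ) else if (2:ℤ) ∣ t then 0 else 1) - 1 := by
  have h := cos_sum_geom r hr t
  have e := Finset.sum_range_succ' (fun k : ℕ => Real.cos (π * t * k / r)) (r - 1)
  rw [Nat.sub_add_cancel hr] at e
  rw [e] at h
  push_cast at h
  simp only [mul_zero, zero_div, Real.cos_zero] at h
  -- h : (∑ k in range (r-1), cos (π*t*(k+1)/r)) + 1 = if ...
  linarith [h]


/-- The Fourier kernel `H a b` for spins indexed by integers `a = 2j`, `b = 2k`:
`H_{jk} = (-1)^{2j+2k} sin(π(2j+1)(2k+1)/r)/sin(π/r)`. -/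
noncomputable def HopfH (r a b : ℕ) : ℝ :=
  (-1) ^ (a + b) * Real.sin (π * (a + 1) * (b + 1) / r) / Real.sin (π / r)

/-- The quantum dimension `dim_q j = H_{0j}`, indexed by `a = 2j`. -/
noncomputable def dimq (r a : ℕ) : ℝ := HopfH r 0 a

/-- The normalisation constant `N = Σ_{j∈L} (dim_q j)²`. -/
noncomputable def Nconst (r : ℕ) : ℝ := ∑ a ∈ Finset.range (r - 1), (dimq r a) ^ 2

lemma sin_pi_div_pos (r : ℕ) (hr : 3 ≤ r) : 0 < Real.sin (π / r) := by
  apply Real.sin_pos_of_pos_of_lt_pi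
  · positivity
  · apply div_lt_self Real.pi_pos
    have : (3:ℝ) ≤ r := by exact_mod_cast hr
    linarith

lemma two_r_not_dvd (r : ℕ) (hr : 3 ≤ r) (t : ℤ) (h0 : t ≠ 0)
    (hb : |t| ≤ 2 * (r:ℤ) - 2) : ¬ (2 * (r:ℤ)) ∣ t := by
  intro hd
  have h1 : (2 * (r:ℤ)) ≤ |t| := Int.le_of_dvd (abs_pos.mpr h0) ((dvd_abs _ _).mpr hd)
  omega

lemma Nconst_eq (r : ℕ) (hr : 3 ≤ r) : Nconst r = r / (2 * Real.sin (π / r) ^ 2) := by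
  have hrpos : 0 < r := by omega
  have hs := sin_pi_div_pos r hr
  have hs0 : Real.sin (π / r) ≠ 0 := ne_of_gt hs
  have step : ∀ a ∈ Finset.range (r - 1), (dimq r a) ^ 2 =
      (1/2) / Real.sin (π / r) ^ 2
        - Real.cos (π * ((2:ℤ):ℝ) * ((a:ℝ) + 1) / r) / 2 / Real.sin (π / r) ^ 2 := by
    intro a _
    unfold dimq HopfH
    have h1 : (((-1:ℝ)) ^ (0 + a)) ^ 2 = 1 := by
      rw [← pow_mul, pow_mul']; norm_num
    rw [div_pow, mul_pow, h1, one_mul, Real.sin_sq_eq_half_sub]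
    rw [show 2 * (π * ((0:ℕ) + 1 : ℝ) * ((a:ℝ) + 1) / r) = π * ((2:ℤ):ℝ) * ((a:ℝ) + 1) / r by
      push_cast; ring]
    ring
  rw [Nconst, Finset.sum_congr rfl step, Finset.sum_sub_distrib, Finset.sum_const]
  have hdvd2 : ¬ (2 * (r:ℤ)) ∣ 2 := two_r_not_dvd r hr 2 (by norm_num) (by rw [show |(2:ℤ)| = 2 from by norm_num]; omega)
  have hshift := cos_sum_shift r hrpos 2
  rw [if_neg hdvd2, if_pos (by norm_num : (2:ℤ) ∣ 2)] at hshift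
  have e2 : ∑ a ∈ Finset.range (r-1), Real.cos (π * ((2:ℤ):ℝ) * ((a:ℝ) + 1) / r) / 2 / Real.sin (π / r) ^ 2
      = (0 - 1) / 2 / Real.sin (π / r) ^ 2 := by
    rw [← hshift]
    rw [Finset.sum_div, Finset.sum_div]
  rw [e2]
  have hr1 : ((r - 1 : ℕ) : ℝ) = (r:ℝ) - 1 := by
    push_cast [Nat.cast_sub (by omega : 1 ≤ r)]; ring
  rw [Finset.card_range, nsmul_eq_mul, hr1]
  field_simp
  ring


/-- Orthogonality of the Hopf-link kernel:
`Σ_{k∈L} H_{jk} H_{kl} = N δ_{jl}`. -/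
theorem hopf_kernel_orthogonality (r : ℕ) (hr : 3 ≤ r)
    (j l : ℕ) (hj : j ≤ r - 2) (hl : l ≤ r - 2) :
    ∑ k ∈ Finset.range (r - 1), HopfH r j k * HopfH r k l
      = Nconst r * (if j = l then (1 : ℝ) else 0) := by
  have hrpos : 0 < r := by omega
  have hs := sin_pi_div_pos r hr
  have hs0 : Real.sin (π / r) ≠ 0 := ne_of_gt hs
  set t₁ : ℤ := (j:ℤ) - l with ht₁
  set t₂ : ℤ := (j:ℤ) + l + 2 with ht₂
  have key : ∀ k ∈ Finset.range (r - 1), HopfH r j k * HopfH r k l =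
      ((-1:ℝ)) ^ (j + l) / (2 * Real.sin (π / r) ^ 2) * Real.cos (π * (t₁:ℝ) * ((k:ℝ) + 1) / r)
      - ((-1:ℝ)) ^ (j + l) / (2 * Real.sin (π / r) ^ 2) * Real.cos (π * (t₂:ℝ) * ((k:ℝ) + 1) / r) := by
    intro k _
    unfold HopfH
    have hsgn : ((-1:ℝ)) ^ (j + k) * (-1) ^ (k + l) = (-1) ^ (j + l) := by
      rw [← pow_add, show j + k + (k + l) = j + l + 2 * k by ring, pow_add, pow_mul]
      norm_num
    have prod_sin :
        Real.sin (π * ((j:ℝ) + 1) * ((k:ℝ) + 1) / r) * Real.sin (π * ((k:ℝ) + 1) * ((l:ℝ) + 1) / r)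
        = (Real.cos (π * (t₁:ℝ) * ((k:ℝ) + 1) / r) - Real.cos (π * (t₂:ℝ) * ((k:ℝ) + 1) / r)) / 2 := by
      have hA : π * (t₁:ℝ) * ((k:ℝ) + 1) / r
          = π * ((j:ℝ) + 1) * ((k:ℝ) + 1) / r - π * ((k:ℝ) + 1) * ((l:ℝ) + 1) / r := by
        push_cast [ht₁]; ring
      have hB : π * (t₂:ℝ) * ((k:ℝ) + 1) / r
          = π * ((j:ℝ) + 1) * ((k:ℝ) + 1) / r + π * ((k:ℝ) + 1) * ((l:ℝ) + 1) / r := by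
        push_cast [ht₂]; ring
      rw [hA, hB, Real.cos_sub, Real.cos_add]
      ring
    rw [div_mul_div_comm, mul_mul_mul_comm, hsgn, prod_sin]
    field_simp
  rw [Finset.sum_congr rfl key, Finset.sum_sub_distrib, ← Finset.mul_sum, ← Finset.mul_sum,
    cos_sum_shift r hrpos t₁, cos_sum_shift r hrpos t₂, Nconst_eq r hr]
  have hnd₂ : ¬ (2 * (r:ℤ)) ∣ t₂ := by
    apply two_r_not_dvd r hr t₂ (by omega)
    rw [ht₂, abs_of_nonneg (by positivity)]
    omega
  by_cases hjl : j = l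
  · subst hjl
    rw [if_pos rfl]
    have h10 : (2 * (r:ℤ)) ∣ t₁ := by simp [ht₁]
    rw [if_pos h10, if_neg hnd₂, if_pos (by rw [ht₂]; omega : (2:ℤ) ∣ t₂)]
    have hsgn1 : ((-1:ℝ)) ^ (j + j) = 1 := by
      rw [← two_mul, pow_mul]; norm_num
    rw [hsgn1]
    field_simp
    ring
  · rw [if_neg hjl]
    have hnd₁ : ¬ (2 * (r:ℤ)) ∣ t₁ := by
      apply two_r_not_dvd r hr t₁ (by omega)
      exact abs_le.mpr ⟨by omega, by omega⟩
    rw [if_neg hnd₁, if_neg hnd₂]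
    have hpar : ((2:ℤ) ∣ t₁) ↔ ((2:ℤ) ∣ t₂) := by omega
    by_cases hp : (2:ℤ) ∣ t₁
    · rw [if_pos hp, if_pos (hpar.mp hp)]; ring
    · rw [if_neg hp, if_neg (fun h => hp (hpar.mpr h))]; ring
end

section
/- Let r ≥ 3 be an integer, L = {0, 1/2, 1, ..., (r-2)/2}, H_{jk} = (-1)^{2j+2k} sin(π(2j+1)(2k+1)/r)/sin(π/r), dim_q k = H_{0k}, and N = Σ_{k∈L} (dim_q k)². Then for every j ∈ L, Σ_{k∈L} (dim_q k) · H_{jk} = N · δ_{j0}; that is, summing the Hopf-link evaluation H_{jk} against the quantum dimensions annihilates every nonzero spin j and yields N when j = 0 (the 'killing' property of an encircling curve in the chain-mail calculus). -/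
open Real Finset

lemma cos_sum_aux (r m : ℕ) (hr : 1 ≤ r) (h1 : 1 ≤ m) (h2 : m ≤ r) :
    ∑ k ∈ Finset.range r, Real.cos (π * m * k / r) = if m % 2 = 1 then 1 else 0 := by
  have hr0 : (r : ℝ) ≠ 0 := by positivity
  set θ : ℝ := π * m / r with hθ
  set z : ℂ := Complex.exp (θ * Complex.I) with hzdef
  have hzk : ∀ k : ℕ, z ^ k = Complex.exp ((π * m * k / r : ℝ) * Complex.I) := by
    intro k
    have h : ((π * m * k / r : ℝ) : ℂ) * Complex.I = (k : ℕ) * ((θ : ℂ) * Complex.I) := by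
      push_cast [hθ]
      ring
    rw [h, Complex.exp_nat_mul, hzdef]
  have hre : ∑ k ∈ Finset.range r, Real.cos (π * m * k / r)
      = (∑ k ∈ Finset.range r, z ^ k).re := by
    rw [Complex.re_sum]
    refine Finset.sum_congr rfl fun k _ => ?_
    rw [hzk k, Complex.exp_ofReal_mul_I_re]
  have hθpos : 0 < θ := by
    rw [hθ]
    have : (0:ℝ) < m := by exact_mod_cast h1
    positivity
  have hθle : θ ≤ π := by
    rw [hθ, div_le_iff₀ (by positivity)]
    have : (m:ℝ) ≤ r := by exact_mod_cast h2
    nlinarith [pi_pos]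
  have hz1 : z ≠ 1 := by
    intro h
    rw [hzdef, Complex.exp_eq_one_iff] at h
    obtain ⟨n, hn⟩ := h
    have him : θ = n * (2 * π) := by
      have := congrArg Complex.im hn
      simpa using this
    rcases le_or_gt n 0 with hn0 | hn0
    · have : (n:ℝ) ≤ 0 := by exact_mod_cast hn0
      nlinarith [pi_pos]
    · have : (1:ℝ) ≤ n := by exact_mod_cast hn0
      nlinarith [pi_pos]
  have hzr : z ^ r = (-1) ^ m := by
    rw [hzk r]
    have h : ((π * m * r / r : ℝ) : ℂ) * Complex.I = (m : ℕ) * ((π : ℝ) * Complex.I) := by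
      have hrC : (r : ℂ) ≠ 0 := Nat.cast_ne_zero.mpr (by omega)
      push_cast
      field_simp
    rw [h, Complex.exp_nat_mul, Complex.exp_pi_mul_I]
  have hsum : ∑ k ∈ Finset.range r, z ^ k = ((-1) ^ m - 1) / (z - 1) := by
    rw [geom_sum_eq hz1, hzr]
  rw [hre, hsum]
  rcases Nat.even_or_odd m with hm | hm
  · have hp : ((-1 : ℂ)) ^ m = 1 := hm.neg_one_pow
    have h0 : m % 2 = 0 := Nat.even_iff.mp hm
    rw [hp, sub_self, zero_div]
    simp [h0]
  · have hpow : ((-1 : ℂ)) ^ m = -1 := hm.neg_one_pow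
    rw [hpow, if_pos (Nat.odd_iff.mp hm)]
    have hzre : z.re = Real.cos θ := Complex.exp_ofReal_mul_I_re θ
    have hzim : z.im = Real.sin θ := Complex.exp_ofReal_mul_I_im θ
    have hns : Complex.normSq (z - 1) ≠ 0 := by
      simp [Complex.normSq_eq_zero, sub_eq_zero, hz1]
    have hnsval : Complex.normSq (z - 1) = 2 - 2 * Real.cos θ := by
      simp [Complex.normSq_apply, Complex.sub_re, Complex.sub_im, hzre, hzim]
      nlinarith [Real.sin_sq_add_cos_sq θ]
    have hcos1 : Real.cos θ ≠ 1 := by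
      intro h
      rw [hnsval, h] at hns
      simp at hns
    have h2c : (2 : ℝ) - 2 * Real.cos θ ≠ 0 := by
      intro h
      exact hcos1 (by linarith)
    rw [Complex.div_re]
    simp only [Complex.sub_re, Complex.sub_im, Complex.neg_re, Complex.neg_im,
      Complex.one_re, Complex.one_im, hzre, hzim, hnsval]
    rw [← add_div, div_eq_one_iff_eq h2c]
    ring

/-- The 'killing' property of an encircling curve:
`Σ_{k∈L} dim_q k · H_{jk} = N δ_{j0}`. -/
theorem hopf_kernel_killing (r : ℕ) (hr : 3 ≤ r) (j : ℕ) (hj : j ≤ r - 2) :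
    ∑ k ∈ Finset.range (r - 1), dimq r k * HopfH r j k
      = Nconst r * (if j = 0 then (1 : ℝ) else 0) := by
  rcases eq_or_ne j 0 with hj0 | hj0
  · subst hj0
    rw [if_pos rfl, mul_one, Nconst]
    exact Finset.sum_congr rfl fun k _ => by rw [pow_two, dimq]
  · rw [if_neg hj0, mul_zero]
    have hr1 : 1 ≤ r := by omega
    have hrr : r - 1 + 1 = r := by omega
    set s : ℝ := Real.sin (π / r) with hs
    have hterm : ∀ k : ℕ, dimq r k * HopfH r j k
        = (-1 : ℝ) ^ j / (s ^ 2 * 2) *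
          (Real.cos (π * (j : ℝ) * ((k : ℝ) + 1) / r)
            - Real.cos (π * ((j + 2 : ℕ) : ℝ) * ((k : ℝ) + 1) / r)) := by
      intro k
      simp only [dimq, HopfH]
      have hsgn : ((-1 : ℝ)) ^ (0 + k) * (-1) ^ (j + k) = (-1) ^ j := by
        rw [← pow_add]
        have h : 0 + k + (j + k) = j + 2 * k := by ring
        rw [h, pow_add, pow_mul]
        norm_num
      have key : Real.sin (π * (((0 : ℕ) : ℝ) + 1) * ((k : ℝ) + 1) / r)
            * Real.sin (π * ((j : ℝ) + 1) * ((k : ℝ) + 1) / r)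
          = (Real.cos (π * (j : ℝ) * ((k : ℝ) + 1) / r)
              - Real.cos (π * ((j + 2 : ℕ) : ℝ) * ((k : ℝ) + 1) / r)) / 2 := by
        have e1 : π * (j : ℝ) * ((k : ℝ) + 1) / r
            = π * ((j : ℝ) + 1) * ((k : ℝ) + 1) / r
              - π * (((0 : ℕ) : ℝ) + 1) * ((k : ℝ) + 1) / r := by
          push_cast; ring
        have e2 : π * ((j + 2 : ℕ) : ℝ) * ((k : ℝ) + 1) / r
            = π * (((0 : ℕ) : ℝ) + 1) * ((k : ℝ) + 1) / r
              + π * ((j : ℝ) + 1) * ((k : ℝ) + 1) / r := by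
          push_cast; ring
        rw [e1, e2, Real.cos_sub, Real.cos_add]
        ring
      linear_combination (Real.sin (π * (((0 : ℕ) : ℝ) + 1) * ((k : ℝ) + 1) / r)
          * Real.sin (π * ((j : ℝ) + 1) * ((k : ℝ) + 1) / r) / s ^ 2) * hsgn
        + ((-1 : ℝ)) ^ j / s ^ 2 * key
    have hshift : ∀ m : ℕ, ∑ k ∈ Finset.range (r - 1),
          Real.cos (π * (m : ℝ) * ((k : ℝ) + 1) / r)
        = (∑ k ∈ Finset.range r, Real.cos (π * (m : ℝ) * (k : ℝ) / r)) - 1 := by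
      intro m
      have h := Finset.sum_range_succ' (fun k => Real.cos (π * (m : ℝ) * (k : ℝ) / r)) (r - 1)
      rw [hrr] at h
      have f0 : Real.cos (π * (m : ℝ) * (((0 : ℕ)) : ℝ) / r) = 1 := by norm_num
      rw [f0] at h
      have hcongr : ∑ i ∈ Finset.range (r - 1),
            Real.cos (π * (m : ℝ) * (((i + 1 : ℕ)) : ℝ) / r)
          = ∑ k ∈ Finset.range (r - 1), Real.cos (π * (m : ℝ) * ((k : ℝ) + 1) / r) :=
        Finset.sum_congr rfl fun i _ => by push_cast; ring_nf
      rw [hcongr] at h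
      linarith
    calc ∑ k ∈ Finset.range (r - 1), dimq r k * HopfH r j k
        = ∑ k ∈ Finset.range (r - 1), (-1 : ℝ) ^ j / (s ^ 2 * 2) *
            (Real.cos (π * (j : ℝ) * ((k : ℝ) + 1) / r)
              - Real.cos (π * ((j + 2 : ℕ) : ℝ) * ((k : ℝ) + 1) / r)) :=
          Finset.sum_congr rfl fun k _ => hterm k
      _ = (-1 : ℝ) ^ j / (s ^ 2 * 2) *
            ((∑ k ∈ Finset.range (r - 1), Real.cos (π * (j : ℝ) * ((k : ℝ) + 1) / r))
              - ∑ k ∈ Finset.range (r - 1),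
                  Real.cos (π * ((j + 2 : ℕ) : ℝ) * ((k : ℝ) + 1) / r)) := by
          rw [← Finset.sum_sub_distrib, ← Finset.mul_sum]
      _ = 0 := by
          rw [hshift j, hshift (j + 2), cos_sum_aux r j hr1 (by omega) (by omega),
            cos_sum_aux r (j + 2) hr1 (by omega) (by omega)]
          have h2 : j % 2 = (j + 2) % 2 := by omega
          rw [h2]
          simp
end

section
/- Let r ≥ 3 be an integer and L = {0, 1/2, 1, ..., (r-2)/2}, with H_{jk} = (-1)^{2j+2k} sin(π(2j+1)(2k+1)/r)/sin(π/r) and dim_q j = H_{0j}. Then the square matrix indexed by L with (j,k)-entry H_{jk}/dim_q j (the kernel of the Fourier transform relating the Turaev–Viro graph observable to the relativistic spin network invariant) is invertible. -/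
open Real Finset

open Polynomial Polynomial.Chebyshev in
private lemma chebU_pair : ∀ n : ℕ,
    ((U ℝ (n : ℤ)).degree ≤ (n : ℕ) ∧ (U ℝ (n : ℤ)).coeff n = 2 ^ n) ∧
    ((U ℝ ((n : ℤ) + 1)).degree ≤ (n + 1 : ℕ) ∧ (U ℝ ((n : ℤ) + 1)).coeff (n + 1) = 2 ^ (n + 1)) := by
  intro n
  induction n with
  | zero =>
    refine ⟨⟨?_, ?_⟩, ?_, ?_⟩
    · simp [U_zero]
    · simp [U_zero]
    · rw [show ((0:ℕ):ℤ) + 1 = 1 by norm_num, U_one,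
        show (2 * X : ℝ[X]) = C 2 * X by rw [map_ofNat]]
      refine (degree_mul_le _ _).trans ?_
      simpa using add_le_add (degree_C_le (a := (2:ℝ))) degree_X_le.le
    · rw [show ((0:ℕ):ℤ) + 1 = 1 by norm_num, U_one,
        show (2 * X : ℝ[X]) = C 2 * X by rw [map_ofNat], coeff_C_mul, coeff_X_one]
      norm_num
  | succ n ih =>
    obtain ⟨⟨hd0, hc0⟩, hd1, hc1⟩ := ih
    have key : U ℝ ((n : ℤ) + 1 + 1) = C 2 * (X * U ℝ ((n : ℤ) + 1)) - U ℝ (n : ℤ) := by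
      have := U_add_two ℝ (n : ℤ)
      rw [show ((n : ℤ) + 2) = (n : ℤ) + 1 + 1 by ring] at this
      rw [this, map_ofNat]; ring
    constructor
    · exact ⟨by push_cast; exact hd1, by push_cast; exact hc1⟩
    push_cast
    constructor
    · rw [key]
      refine (degree_sub_le _ _).trans (max_le ?_ (hd0.trans (by exact_mod_cast by omega)))
      have h1 : degree (X * U ℝ ((n:ℤ)+1)) ≤ ((n + 2 : ℕ) : WithBot ℕ) := by
        refine (degree_mul_le _ _).trans ?_
        calc degree (X : ℝ[X]) + degree (U ℝ ((n:ℤ)+1)) ≤ 1 + ((n+1:ℕ) : WithBot ℕ) :=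
              add_le_add degree_X_le hd1
          _ = ((n + 2 : ℕ) : WithBot ℕ) := by push_cast; ring
      refine (degree_mul_le _ _).trans ?_
      exact (add_le_add (degree_C_le (a := (2:ℝ))) h1).trans (le_of_eq (by push_cast; ring))
    · rw [key, coeff_sub, coeff_C_mul, show n + 2 = (n + 1) + 1 from rfl, coeff_X_mul,
        coeff_eq_zero_of_degree_lt (lt_of_le_of_lt hd0 (by exact_mod_cast by omega)), hc1]
      ring

open Polynomial Polynomial.Chebyshev in
private lemma chebU_natDegree (n : ℕ) :
    (U ℝ (n : ℤ)).natDegree = n ∧ (U ℝ (n : ℤ)).leadingCoeff = 2 ^ n := by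
  obtain ⟨hd, hc⟩ := (chebU_pair n).1
  have hc' : (U ℝ (n : ℤ)).coeff n ≠ 0 := by rw [hc]; positivity
  have hle : (U ℝ (n : ℤ)).natDegree ≤ n := natDegree_le_of_degree_le hd
  have hge : n ≤ (U ℝ (n : ℤ)).natDegree := le_natDegree_of_ne_zero hc'
  have heq : (U ℝ (n : ℤ)).natDegree = n := le_antisymm hle hge
  exact ⟨heq, by rw [leadingCoeff, heq, hc]⟩

/-- The kernel of the Fourier transform, the matrix with `(j,k)` entry
`H_{jk}/dim_q j`, is invertible. -/
theorem fourier_kernel_invertible (r : ℕ) (hr : 3 ≤ r) :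
    IsUnit (Matrix.of fun a b : Fin (r - 1) =>
      HopfH r (a : ℕ) (b : ℕ) / dimq r (a : ℕ)) := by
  classical
  have hrR : (3:ℝ) ≤ (r:ℝ) := by exact_mod_cast hr
  have hrpos : (0:ℝ) < r := by linarith
  have hs : Real.sin (π / r) ≠ 0 := by
    refine ne_of_gt (Real.sin_pos_of_pos_of_lt_pi (div_pos pi_pos hrpos) ?_)
    rw [div_lt_iff₀ hrpos]
    nlinarith [pi_pos]
  set θ : Fin (r - 1) → ℝ := fun a => π * ((a : ℕ) + 1) / r with hθdef
  have hθmem : ∀ a : Fin (r - 1), 0 < θ a ∧ θ a < π := by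
    intro a
    have ha : ((a : ℕ) : ℝ) + 1 < (r : ℝ) := by
      have : (a : ℕ) < r - 1 := a.isLt
      have : (a : ℕ) + 1 < r := by omega
      exact_mod_cast this
    constructor
    · apply div_pos (by positivity) hrpos
    · rw [div_lt_iff₀ hrpos]
      nlinarith [pi_pos]
  have hsinθ : ∀ a : Fin (r - 1), Real.sin (θ a) ≠ 0 := fun a =>
    ne_of_gt (Real.sin_pos_of_pos_of_lt_pi (hθmem a).1 (hθmem a).2)
  -- the monic polynomials
  set p : Fin (r - 1) → Polynomial ℝ :=
    fun b => Polynomial.C ((2:ℝ) ^ (b : ℕ))⁻¹ * Polynomial.Chebyshev.U ℝ ((b : ℕ) : ℤ) with hpdef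
  have h2ne : ∀ b : Fin (r - 1), ((2:ℝ) ^ (b : ℕ))⁻¹ ≠ 0 := fun b => by positivity
  have hdeg : ∀ b : Fin (r - 1), (p b).natDegree = (b : ℕ) := by
    intro b
    rw [hpdef, Polynomial.natDegree_C_mul (h2ne b), (chebU_natDegree (b : ℕ)).1]
  have hmonic : ∀ b : Fin (r - 1), (p b).Monic := by
    intro b
    have h : (p b).leadingCoeff = 1 := by
      rw [hpdef]
      simp only
      rw [Polynomial.leadingCoeff_mul, Polynomial.leadingCoeff_C, (chebU_natDegree (b : ℕ)).2]
      simp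
    exact h
  -- entry identity
  have entry : ∀ a b : Fin (r - 1), HopfH r (a : ℕ) (b : ℕ) / dimq r (a : ℕ) =
      (p b).eval (Real.cos (θ a)) * ((-1:ℝ) ^ (b : ℕ) * 2 ^ (b : ℕ)) := by
    intro a b
    have hU := Polynomial.Chebyshev.U_real_cos (θ a) ((b : ℕ) : ℤ)
    have h1 : Real.sin (π * ((a:ℕ) + 1) * ((b:ℕ) + 1) / r) =
        (Polynomial.Chebyshev.U ℝ ((b:ℕ):ℤ)).eval (Real.cos (θ a)) * Real.sin (θ a) := by
      rw [hU]; congr 1; rw [hθdef]; push_cast; ring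
    have h2 : π * ((0:ℕ) + 1) * ((a:ℕ) + 1) / r = θ a := by
      rw [hθdef]; push_cast; ring
    have hna : ((-1:ℝ)) ^ (a : ℕ) ≠ 0 := pow_ne_zero _ (by norm_num)
    have h2b : ((2:ℝ)) ^ (b : ℕ) ≠ 0 := by positivity
    have hdim : dimq r (a : ℕ) = (-1:ℝ) ^ (a : ℕ) * Real.sin (θ a) / Real.sin (π / r) := by
      rw [dimq, HopfH, h2, zero_add]
    have hdimne : dimq r (a : ℕ) ≠ 0 := by
      rw [hdim]; exact div_ne_zero (mul_ne_zero hna (hsinθ a)) hs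
    rw [div_eq_iff hdimne, hdim, HopfH, h1, hpdef]
    simp only [Polynomial.eval_mul, Polynomial.eval_C, pow_add]
    have hcancel : ∀ x : ℝ, ((2:ℝ) ^ (b:ℕ))⁻¹ * x * ((-1:ℝ) ^ (b:ℕ) * 2 ^ (b:ℕ)) =
        (-1:ℝ) ^ (b:ℕ) * x := by
      intro x
      have : ((2:ℝ) ^ (b:ℕ))⁻¹ * (2:ℝ) ^ (b:ℕ) = 1 := inv_mul_cancel₀ h2b
      calc ((2:ℝ) ^ (b:ℕ))⁻¹ * x * ((-1:ℝ) ^ (b:ℕ) * 2 ^ (b:ℕ))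
          = (((2:ℝ) ^ (b:ℕ))⁻¹ * (2:ℝ) ^ (b:ℕ)) * ((-1:ℝ) ^ (b:ℕ) * x) := by ring
        _ = (-1:ℝ) ^ (b:ℕ) * x := by rw [this, one_mul]
    rw [hcancel]
    ring
  have hM : (Matrix.of fun a b : Fin (r - 1) =>
      HopfH r (a : ℕ) (b : ℕ) / dimq r (a : ℕ)) =
      (Matrix.of fun a b : Fin (r - 1) => (p b).eval (Real.cos (θ a))) *
        Matrix.diagonal (fun b : Fin (r - 1) => (-1:ℝ) ^ (b : ℕ) * 2 ^ (b : ℕ)) := by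
    ext a b
    rw [Matrix.mul_diagonal]
    exact entry a b
  rw [hM]
  refine IsUnit.mul ?_ ?_
  · rw [Matrix.isUnit_iff_isUnit_det, isUnit_iff_ne_zero,
      ← Matrix.det_eval_matrixOfPolynomials_eq_det_vandermonde (fun a => Real.cos (θ a)) p hdeg hmonic]
    rw [Matrix.det_vandermonde_ne_zero_iff]
    intro a c hac
    have := Real.injOn_cos ⟨(hθmem a).1.le, (hθmem a).2.le⟩ ⟨(hθmem c).1.le, (hθmem c).2.le⟩ hac
    rw [hθdef] at this
    have hπ : π ≠ 0 := Real.pi_ne_zero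
    have hr0 : (r : ℝ) ≠ 0 := ne_of_gt hrpos
    have h' : ((a : ℕ) : ℝ) = ((c : ℕ) : ℝ) := by
      have h3 : π * (((a:ℕ):ℝ) + 1) / r = π * (((c:ℕ):ℝ) + 1) / r := this
      have h4 : π * (((a:ℕ):ℝ) + 1) = π * (((c:ℕ):ℝ) + 1) := by
        have h5 := congrArg (fun x : ℝ => x * r) h3
        simpa [div_mul_cancel₀, hr0] using h5
      have h6 := mul_left_cancel₀ hπ h4
      linarith
    exact Fin.ext (by exact_mod_cast h')
  · rw [Matrix.isUnit_iff_isUnit_det, Matrix.det_diagonal, isUnit_iff_ne_zero]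
    exact Finset.prod_ne_zero_iff.mpr fun b _ => by positivity
end
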